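/- Let Z ⊆ ℝ^d be a zonotope with generator set 𝒢 all of whose extreme points lie in {0,1/2,1}^d, and let 𝒜 ⊆ 𝒢 be minimally linearly dependent. Then the linear span of 𝒜 and the linear span of 𝒢∖𝒜 are orthogonal with respect to the standard inner product on ℝ^d: every vector in span(𝒜) is orthogonal to every vector in span(𝒢∖𝒜). -/

import Mathlib

open Set Pointwise

noncomputable section

/-- `Z` is a zonotope with generator set `G`: `Z = t + Σ_{g ∈ G} conv{0,g}` for some
translation `t`, where the generators are nonzero and pairwise non-collinear. -/
def IsZonotopeWithGenerators {d : ℕ} (Z : Set (Fin d → ℝ)) (G : Finset (Fin d → ℝ)) : Prop :=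
  (∀ g ∈ G, g ≠ 0) ∧
  (∀ g ∈ G, ∀ h ∈ G, g ≠ h → ∀ r : ℝ, g ≠ r • h) ∧
  ∃ t : Fin d → ℝ,
    Z = {x | ∃ c : (Fin d → ℝ) → ℝ, (∀ g, 0 ≤ c g ∧ c g ≤ 1) ∧ x = t + ∑ g ∈ G, c g • g}

/-- A set is half-integral when all of its extreme points have coordinates in `{0,1/2,1}`. -/
def IsHalfIntegral {d : ℕ} (P : Set (Fin d → ℝ)) : Prop :=
  ∀ x ∈ Set.extremePoints ℝ P, ∀ i, x i = 0 ∨ x i = 1/2 ∨ x i = 1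

/-- A finite set of vectors is minimally linearly dependent when it is linearly dependent
but every proper subset of it is linearly independent. -/
def MinLinDep {d : ℕ} (A : Finset (Fin d → ℝ)) : Prop :=
  ¬ LinearIndependent ℝ (fun x : (A : Set (Fin d → ℝ)) => x.val) ∧
  ∀ B : Finset (Fin d → ℝ), B ⊂ A →
    LinearIndependent ℝ (fun x : (B : Set (Fin d → ℝ)) => x.val)

namespace HalfIntAux

open Matrix

variable {d : ℕ}

/-- Dot product with a fixed vector, as a linear map. -/
def dotL (ℓ : Fin d → ℝ) : (Fin d → ℝ) →ₗ[ℝ] ℝ where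
  toFun x := ℓ ⬝ᵥ x
  map_add' x y := dotProduct_add ℓ x y
  map_smul' c x := by simp [dotProduct_smul, smul_eq_mul]

lemma dotL_apply (ℓ x : Fin d → ℝ) : dotL ℓ x = ℓ ⬝ᵥ x := rfl

lemma dot_self_pos {v : Fin d → ℝ} (hv : v ≠ 0) : 0 < v ⬝ᵥ v := by
  have h0 : (0:ℝ) ≤ v ⬝ᵥ v := Finset.sum_nonneg fun i _ => mul_self_nonneg _
  rcases h0.lt_or_eq with h | h
  · exact h
  · exact absurd (dotProduct_self_eq_zero.mp h.symm) hv

lemma exists_generic (W : Submodule ℝ (Fin d → ℝ)) (S : Finset (Fin d → ℝ)) :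
    (∀ h ∈ S, ∃ v ∈ W, v ⬝ᵥ h ≠ 0) → ∃ ℓ ∈ W, ∀ h ∈ S, ℓ ⬝ᵥ h ≠ 0 := by
  classical
  induction S using Finset.induction_on with
  | empty => exact fun _ => ⟨0, W.zero_mem, fun h hh => absurd hh (Finset.notMem_empty h)⟩
  | @insert a s ha ih =>
    intro hS
    obtain ⟨ℓ, hℓW, hℓ⟩ := ih fun h hh => hS h (Finset.mem_insert_of_mem hh)
    obtain ⟨v, hvW, hva⟩ := hS a (Finset.mem_insert_self a s)
    obtain ⟨c, hc⟩ := Finset.exists_notMem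
      ((insert a s).image fun k => -(ℓ ⬝ᵥ k) / (v ⬝ᵥ k))
    refine ⟨ℓ + c • v, W.add_mem hℓW (W.smul_mem c hvW), fun k hk h0 => ?_⟩
    have hdot : (ℓ + c • v) ⬝ᵥ k = ℓ ⬝ᵥ k + c * (v ⬝ᵥ k) := by
      rw [add_dotProduct, smul_dotProduct, smul_eq_mul]
    rw [hdot] at h0
    by_cases hv : v ⬝ᵥ k = 0
    · rcases Finset.mem_insert.mp hk with rfl | hks
      · exact hva hv
      · rw [hv, mul_zero, add_zero] at h0
        exact hℓ k hks h0
    · exact hc (Finset.mem_image.mpr ⟨k, hk, by field_simp; linarith⟩)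

lemma sign_stable {s y : ℝ} (hy : |y| < |s|) : (0 < s + y ↔ 0 < s) ∧ s + y ≠ 0 := by
  have h1 := le_abs_self y
  have h2 := neg_abs_le y
  rcases lt_trichotomy s 0 with hs | hs | hs
  · rw [abs_of_neg hs] at hy
    refine ⟨⟨fun h => by linarith, fun h => by linarith⟩, fun h => by linarith⟩
  · rw [hs, abs_zero] at hy; linarith [abs_nonneg y]
  · rw [abs_of_pos hs] at hy
    refine ⟨⟨fun h => hs, fun h => by linarith⟩, fun h => by linarith⟩

lemma sum_filter_eq {α β : Type*} [AddCommMonoid β] [DecidableEq α] {F G : Finset α}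
    (hFG : F ⊆ G) (f : α → β) :
    ∑ g ∈ F, f g = ∑ g ∈ G, if g ∈ F then f g else 0 := by
  rw [Finset.sum_ite_mem, Finset.inter_eq_right.mpr hFG]

lemma vertex_extreme {Z : Set (Fin d → ℝ)} {G : Finset (Fin d → ℝ)} {t : Fin d → ℝ}
    (hZeq : Z = {x | ∃ c : (Fin d → ℝ) → ℝ, (∀ g, 0 ≤ c g ∧ c g ≤ 1) ∧ x = t + ∑ g ∈ G, c g • g})
    (ℓ : Fin d → ℝ) (hℓ : ∀ g ∈ G, ℓ ⬝ᵥ g ≠ 0)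
    (F : Finset (Fin d → ℝ)) (hF : ∀ g, g ∈ F ↔ g ∈ G ∧ 0 < ℓ ⬝ᵥ g) :
    (t + ∑ g ∈ F, g) ∈ Set.extremePoints ℝ Z := by
  classical
  have hFG : F ⊆ G := fun g hg => ((hF g).mp hg).1
  have hind : ∑ g ∈ G, (if g ∈ F then (1:ℝ) else 0) • g = ∑ g ∈ F, g := by
    simp only [ite_smul, one_smul, zero_smul]
    exact (sum_filter_eq hFG id).symm
  have hpZ : (t + ∑ g ∈ F, g) ∈ Z := by
    rw [hZeq]
    exact ⟨fun g => if g ∈ F then 1 else 0, fun g => by by_cases hgF : g ∈ F <;> simp [hgF], by rw [hind]⟩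
  have hmax : ∀ x ∈ Z, dotL ℓ x ≤ dotL ℓ (t + ∑ g ∈ F, g) ∧
      (dotL ℓ x = dotL ℓ (t + ∑ g ∈ F, g) → x = t + ∑ g ∈ F, g) := by
    intro x hx
    rw [hZeq] at hx
    obtain ⟨c, hc, rfl⟩ := hx
    have hxval : dotL ℓ (t + ∑ g ∈ G, c g • g) = dotL ℓ t + ∑ g ∈ G, c g * (ℓ ⬝ᵥ g) := by
      rw [map_add, map_sum]
      simp only [dotL_apply, dotProduct_smul, smul_eq_mul]
    have hpval : dotL ℓ (t + ∑ g ∈ F, g) =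
        dotL ℓ t + ∑ g ∈ G, (if g ∈ F then ℓ ⬝ᵥ g else 0) := by
      rw [map_add, map_sum]
      simp only [dotL_apply]
      rw [sum_filter_eq hFG (fun g => ℓ ⬝ᵥ g)]
    have hterm : ∀ g ∈ G, c g * (ℓ ⬝ᵥ g) ≤ (if g ∈ F then ℓ ⬝ᵥ g else 0) := by
      intro g hg
      by_cases hgF : g ∈ F
      · simp only [hgF, if_true]
        have h1 : 0 < ℓ ⬝ᵥ g := ((hF g).mp hgF).2
        nlinarith [(hc g).2]
      · simp only [hgF, if_false]
        have h1 : ℓ ⬝ᵥ g < 0 := by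
          rcases (hℓ g hg).lt_or_gt with h | h
          · exact h
          · exact absurd ((hF g).mpr ⟨hg, h⟩) hgF
        nlinarith [(hc g).1]
    constructor
    · rw [hxval, hpval]
      exact add_le_add_right (Finset.sum_le_sum hterm) _
    · intro heq
      rw [hxval, hpval] at heq
      have hsums : ∑ g ∈ G, c g * (ℓ ⬝ᵥ g) = ∑ g ∈ G, (if g ∈ F then ℓ ⬝ᵥ g else 0) := by
        linarith
      have hsum0 : ∑ g ∈ G, ((if g ∈ F then ℓ ⬝ᵥ g else 0) - c g * (ℓ ⬝ᵥ g)) = 0 := by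
        rw [Finset.sum_sub_distrib, hsums, sub_self]
      have hz := (Finset.sum_eq_zero_iff_of_nonneg
        (fun g hg => sub_nonneg.mpr (hterm g hg))).mp hsum0
      have hcg : ∀ g ∈ G, c g • g = (if g ∈ F then (1:ℝ) else 0) • g := by
        intro g hg
        have hzg := hz g hg
        by_cases hgF : g ∈ F
        · simp only [hgF, if_true, one_smul] at hzg ⊢
          have h1 : ℓ ⬝ᵥ g ≠ 0 := hℓ g hg
          have : (1 - c g) * (ℓ ⬝ᵥ g) = 0 := by ring_nf; linarith
          have : c g = 1 := by
            rcases mul_eq_zero.mp this with h | h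
            · linarith
            · exact absurd h h1
          rw [this, one_smul]
        · simp only [hgF, if_false, zero_smul] at hzg ⊢
          have h1 : ℓ ⬝ᵥ g ≠ 0 := hℓ g hg
          have : c g = 0 := by
            rcases mul_eq_zero.mp (by linarith : c g * (ℓ ⬝ᵥ g) = 0) with h | h
            · exact h
            · exact absurd h h1
          rw [this, zero_smul]
      rw [Finset.sum_congr rfl hcg, hind]
  rw [mem_extremePoints]
  refine ⟨hpZ, fun x₁ h1 x₂ h2 hseg => ?_⟩
  obtain ⟨a, b, ha, hb, hab, hsum⟩ := hseg
  have hM1 := (hmax x₁ h1).1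
  have hM2 := (hmax x₂ h2).1
  have hL : a * dotL ℓ x₁ + b * dotL ℓ x₂ = dotL ℓ (t + ∑ g ∈ F, g) := by
    rw [← hsum, map_add, LinearMap.map_smul, LinearMap.map_smul, smul_eq_mul, smul_eq_mul]
  have hs : a * (dotL ℓ (t + ∑ g ∈ F, g) - dotL ℓ x₁)
      + b * (dotL ℓ (t + ∑ g ∈ F, g) - dotL ℓ x₂) = 0 := by
    linear_combination dotL ℓ (t + ∑ g ∈ F, g) * hab - hL
  have t1 : 0 ≤ a * (dotL ℓ (t + ∑ g ∈ F, g) - dotL ℓ x₁) :=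
    mul_nonneg ha.le (sub_nonneg.mpr hM1)
  have t2 : 0 ≤ b * (dotL ℓ (t + ∑ g ∈ F, g) - dotL ℓ x₂) :=
    mul_nonneg hb.le (sub_nonneg.mpr hM2)
  have e1 : dotL ℓ x₁ = dotL ℓ (t + ∑ g ∈ F, g) := by
    have h0 : a * (dotL ℓ (t + ∑ g ∈ F, g) - dotL ℓ x₁) = 0 := by linarith
    rcases mul_eq_zero.mp h0 with h | h
    · exact absurd h (ne_of_gt ha)
    · linarith [sub_eq_zero.mp h]
  have e2 : dotL ℓ x₂ = dotL ℓ (t + ∑ g ∈ F, g) := by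
    have h0 : b * (dotL ℓ (t + ∑ g ∈ F, g) - dotL ℓ x₂) = 0 := by linarith
    rcases mul_eq_zero.mp h0 with h | h
    · exact absurd h (ne_of_gt hb)
    · linarith [sub_eq_zero.mp h]
  exact ⟨(hmax x₁ h1).2 e1, (hmax x₂ h2).2 e2⟩

lemma vertex_coords {Z : Set (Fin d → ℝ)} {G : Finset (Fin d → ℝ)} {t : Fin d → ℝ}
    (hZeq : Z = {x | ∃ c : (Fin d → ℝ) → ℝ, (∀ g, 0 ≤ c g ∧ c g ≤ 1) ∧ x = t + ∑ g ∈ G, c g • g})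
    (hHI : IsHalfIntegral Z)
    (ℓ : Fin d → ℝ) (hℓ : ∀ g ∈ G, ℓ ⬝ᵥ g ≠ 0)
    (F : Finset (Fin d → ℝ)) (hF : ∀ g, g ∈ F ↔ g ∈ G ∧ 0 < ℓ ⬝ᵥ g) :
    ∀ i, (t + ∑ g ∈ F, g) i = 0 ∨ (t + ∑ g ∈ F, g) i = 1/2 ∨ (t + ∑ g ∈ F, g) i = 1 :=
  hHI _ (vertex_extreme hZeq ℓ hℓ F hF)

lemma diff_cases {u v w : ℝ} (hu : u = v - w)
    (hv : v = 0 ∨ v = 1/2 ∨ v = 1) (hw : w = 0 ∨ w = 1/2 ∨ w = 1) :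
    u = 0 ∨ 1/2 ≤ |u| := by
  rcases hv with rfl | rfl | rfl <;> rcases hw with rfl | rfl | rfl <;>
    rw [hu] <;>
    first
      | (left; norm_num; done)
      | (right; rw [le_abs]; norm_num)

lemma gen_entries {Z : Set (Fin d → ℝ)} {G : Finset (Fin d → ℝ)}
    (hZ : IsZonotopeWithGenerators Z G) (hHI : IsHalfIntegral Z) :
    ∀ g ∈ G, ∀ i, g i = 0 ∨ 1/2 ≤ |g i| := by
  classical
  obtain ⟨hne, hcol, t, hZeq⟩ := hZ
  intro g hg i
  have hgg : 0 < g ⬝ᵥ g := dot_self_pos (hne g hg)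
  have hWgen : ∀ h ∈ G.erase g, ∃ v ∈ LinearMap.ker (dotL g), v ⬝ᵥ h ≠ 0 := by
    intro h hh
    have hhG := Finset.mem_of_mem_erase hh
    have hhg : h ≠ g := Finset.ne_of_mem_erase hh
    set v := h - ((h ⬝ᵥ g) / (g ⬝ᵥ g)) • g with hv
    have hvg : g ⬝ᵥ v = 0 := by
      rw [hv, dotProduct_sub, dotProduct_smul, smul_eq_mul, dotProduct_comm g h]
      field_simp
      ring
    have hvne : v ≠ 0 := by
      intro h0
      exact hcol h hhG g hg hhg ((h ⬝ᵥ g) / (g ⬝ᵥ g)) (sub_eq_zero.mp h0)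
    have hexp : v ⬝ᵥ h = v ⬝ᵥ v := by
      simp only [hv, sub_dotProduct, dotProduct_sub, smul_dotProduct, dotProduct_smul,
        smul_eq_mul, dotProduct_comm h g]
      field_simp
      ring
    refine ⟨v, LinearMap.mem_ker.mpr (by rw [dotL_apply]; exact hvg), fun h0 => ?_⟩
    exact hvne (dotProduct_self_eq_zero.mp (by rw [← hexp]; exact h0))
  obtain ⟨ℓ₀, hℓ₀W, hℓ₀⟩ := exists_generic (LinearMap.ker (dotL g)) (G.erase g) hWgen
  have hℓ₀g : ℓ₀ ⬝ᵥ g = 0 := by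
    rw [dotProduct_comm]
    exact LinearMap.mem_ker.mp hℓ₀W
  set N := 1 + ∑ h ∈ G.erase g, |g ⬝ᵥ h| / |ℓ₀ ⬝ᵥ h| with hN
  have hsumnn : (0:ℝ) ≤ ∑ h ∈ G.erase g, |g ⬝ᵥ h| / |ℓ₀ ⬝ᵥ h| :=
    Finset.sum_nonneg fun h _ => div_nonneg (abs_nonneg _) (abs_nonneg _)
  have hN1 : (1:ℝ) ≤ N := by rw [hN]; linarith
  have hN0 : (0:ℝ) < N := by linarith
  have hNbound : ∀ h ∈ G.erase g, |g ⬝ᵥ h| < N * |ℓ₀ ⬝ᵥ h| := by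
    intro h hh
    have hpos : 0 < |ℓ₀ ⬝ᵥ h| := abs_pos.mpr (hℓ₀ h hh)
    have hle : |g ⬝ᵥ h| / |ℓ₀ ⬝ᵥ h| ≤ ∑ k ∈ G.erase g, |g ⬝ᵥ k| / |ℓ₀ ⬝ᵥ k| :=
      Finset.single_le_sum (f := fun k => |g ⬝ᵥ k| / |ℓ₀ ⬝ᵥ k|) (fun k _ => div_nonneg (abs_nonneg _) (abs_nonneg _)) hh
    have hlt : |g ⬝ᵥ h| / |ℓ₀ ⬝ᵥ h| < N := by rw [hN]; linarith
    calc |g ⬝ᵥ h| = |g ⬝ᵥ h| / |ℓ₀ ⬝ᵥ h| * |ℓ₀ ⬝ᵥ h| := by field_simp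
      _ < N * |ℓ₀ ⬝ᵥ h| := mul_lt_mul_of_pos_right hlt hpos
  have habs : ∀ h ∈ G.erase g, |g ⬝ᵥ h| < |N * (ℓ₀ ⬝ᵥ h)| := by
    intro h hh
    rw [abs_mul, abs_of_pos hN0]
    exact hNbound h hh
  have hdplus : ∀ h : Fin d → ℝ, (N • ℓ₀ + g) ⬝ᵥ h = N * (ℓ₀ ⬝ᵥ h) + g ⬝ᵥ h := by
    intro h; rw [add_dotProduct, smul_dotProduct, smul_eq_mul]
  have hdminus : ∀ h : Fin d → ℝ, (N • ℓ₀ - g) ⬝ᵥ h = N * (ℓ₀ ⬝ᵥ h) + -(g ⬝ᵥ h) := by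
    intro h; rw [sub_dotProduct, smul_dotProduct, smul_eq_mul, sub_eq_add_neg]
  have hNiff : ∀ x : ℝ, x ≠ 0 → (0 < N * x ↔ 0 < x) := by
    intro x hx
    constructor <;> intro h <;> nlinarith
  have hplus : ∀ h ∈ G.erase g,
      (0 < (N • ℓ₀ + g) ⬝ᵥ h ↔ 0 < ℓ₀ ⬝ᵥ h) ∧ (N • ℓ₀ + g) ⬝ᵥ h ≠ 0 := by
    intro h hh
    have hs := sign_stable (habs h hh)
    rw [hdplus h]
    exact ⟨hs.1.trans (hNiff _ (hℓ₀ h hh)), hs.2⟩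
  have hminus : ∀ h ∈ G.erase g,
      (0 < (N • ℓ₀ - g) ⬝ᵥ h ↔ 0 < ℓ₀ ⬝ᵥ h) ∧ (N • ℓ₀ - g) ⬝ᵥ h ≠ 0 := by
    intro h hh
    have habs' : |-(g ⬝ᵥ h)| < |N * (ℓ₀ ⬝ᵥ h)| := by rw [abs_neg]; exact habs h hh
    have hs := sign_stable habs'
    rw [hdminus h]
    exact ⟨hs.1.trans (hNiff _ (hℓ₀ h hh)), hs.2⟩
  have hpg : (N • ℓ₀ + g) ⬝ᵥ g = g ⬝ᵥ g := by rw [hdplus g, hℓ₀g]; ring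
  have hmg : (N • ℓ₀ - g) ⬝ᵥ g = -(g ⬝ᵥ g) := by rw [hdminus g, hℓ₀g]; ring
  have hnzp : ∀ h ∈ G, (N • ℓ₀ + g) ⬝ᵥ h ≠ 0 := by
    intro h hh
    by_cases hhg : h = g
    · rw [hhg, hpg]; exact hgg.ne'
    · exact (hplus h (Finset.mem_erase.mpr ⟨hhg, hh⟩)).2
  have hnzm : ∀ h ∈ G, (N • ℓ₀ - g) ⬝ᵥ h ≠ 0 := by
    intro h hh
    by_cases hhg : h = g
    · rw [hhg, hmg]; exact neg_ne_zero.mpr hgg.ne'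
    · exact (hminus h (Finset.mem_erase.mpr ⟨hhg, hh⟩)).2
  set Fp := G.filter (fun h => 0 < (N • ℓ₀ + g) ⬝ᵥ h) with hFp
  set Fm := G.filter (fun h => 0 < (N • ℓ₀ - g) ⬝ᵥ h) with hFm
  have hFpspec : ∀ h, h ∈ Fp ↔ h ∈ G ∧ 0 < (N • ℓ₀ + g) ⬝ᵥ h := fun h => Finset.mem_filter
  have hFmspec : ∀ h, h ∈ Fm ↔ h ∈ G ∧ 0 < (N • ℓ₀ - g) ⬝ᵥ h := fun h => Finset.mem_filter
  have hcp := vertex_coords hZeq hHI _ hnzp Fp hFpspec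
  have hcm := vertex_coords hZeq hHI _ hnzm Fm hFmspec
  have hgFm : g ∉ Fm := by
    rw [hFmspec]
    rintro ⟨-, hpos⟩
    rw [hmg] at hpos
    linarith
  have hFF : Fp = insert g Fm := by
    ext h
    rw [hFpspec, Finset.mem_insert, hFmspec]
    by_cases hhg : h = g
    · subst hhg
      rw [hpg]
      exact ⟨fun _ => Or.inl rfl, fun _ => ⟨hg, hgg⟩⟩
    · constructor
      · rintro ⟨hhG, hpos⟩
        have hhh := Finset.mem_erase.mpr ⟨hhg, hhG⟩
        exact Or.inr ⟨hhG, (hminus h hhh).1.mpr ((hplus h hhh).1.mp hpos)⟩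
      · rintro (rfl | ⟨hhG, hpos⟩)
        · exact absurd rfl hhg
        · have hhh := Finset.mem_erase.mpr ⟨hhg, hhG⟩
          exact ⟨hhG, (hplus h hhh).1.mpr ((hminus h hhh).1.mp hpos)⟩
  have hdiff : g i = (t + ∑ h ∈ Fp, h) i - (t + ∑ h ∈ Fm, h) i := by
    rw [hFF, Finset.sum_insert hgFm]
    simp only [Pi.add_apply, Finset.sum_apply]
    ring
  exact diff_cases hdiff (hcp i) (hcm i)

lemma colsum {Z : Set (Fin d → ℝ)} {G : Finset (Fin d → ℝ)}
    (hZ : IsZonotopeWithGenerators Z G) (hHI : IsHalfIntegral Z) :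
    ∀ i, ∑ g ∈ G, |g i| ≤ 1 := by
  classical
  obtain ⟨hne, hcol, t, hZeq⟩ := hZ
  intro i
  obtain ⟨ℓ₀, -, hℓ₀⟩ := exists_generic ⊤ G
    (fun h hh => ⟨h, trivial, (dot_self_pos (hne h hh)).ne'⟩)
  set e : Fin d → ℝ := Pi.single i 1 with he
  have hedot : ∀ h : Fin d → ℝ, e ⬝ᵥ h = h i := by
    intro h; rw [he, single_dotProduct, one_mul]
  set N := 1 + ∑ h ∈ G, |ℓ₀ ⬝ᵥ h| / |h i| with hN
  have hsumnn : (0:ℝ) ≤ ∑ h ∈ G, |ℓ₀ ⬝ᵥ h| / |h i| :=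
    Finset.sum_nonneg fun h _ => div_nonneg (abs_nonneg _) (abs_nonneg _)
  have hN0 : (0:ℝ) < N := by rw [hN]; linarith
  have hNbound : ∀ h ∈ G, h i ≠ 0 → |ℓ₀ ⬝ᵥ h| < |N * h i| := by
    intro h hh hhi
    have hpos : 0 < |h i| := abs_pos.mpr hhi
    have hle : |ℓ₀ ⬝ᵥ h| / |h i| ≤ ∑ k ∈ G, |ℓ₀ ⬝ᵥ k| / |k i| :=
      Finset.single_le_sum (f := fun k => |ℓ₀ ⬝ᵥ k| / |k i|) (fun k _ => div_nonneg (abs_nonneg _) (abs_nonneg _)) hh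
    have hlt : |ℓ₀ ⬝ᵥ h| / |h i| < N := by rw [hN]; linarith
    rw [abs_mul, abs_of_pos hN0]
    calc |ℓ₀ ⬝ᵥ h| = |ℓ₀ ⬝ᵥ h| / |h i| * |h i| := by field_simp
      _ < N * |h i| := mul_lt_mul_of_pos_right hlt hpos
  have hdplus : ∀ h : Fin d → ℝ, (N • e + ℓ₀) ⬝ᵥ h = N * h i + ℓ₀ ⬝ᵥ h := by
    intro h; rw [add_dotProduct, smul_dotProduct, smul_eq_mul, hedot]
  have hdminus : ∀ h : Fin d → ℝ, (ℓ₀ - N • e) ⬝ᵥ h = N * (-(h i)) + ℓ₀ ⬝ᵥ h := by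
    intro h; rw [sub_dotProduct, smul_dotProduct, smul_eq_mul, hedot]; ring
  have hNiff : ∀ x : ℝ, x ≠ 0 → (0 < N * x ↔ 0 < x) := by
    intro x hx
    constructor <;> intro h <;> nlinarith
  have hplus : ∀ h ∈ G, h i ≠ 0 →
      ((0 < (N • e + ℓ₀) ⬝ᵥ h ↔ 0 < h i) ∧ (N • e + ℓ₀) ⬝ᵥ h ≠ 0) := by
    intro h hh hhi
    have habs : |ℓ₀ ⬝ᵥ h| < |N * h i| := hNbound h hh hhi
    have hs := sign_stable habs
    rw [hdplus h]
    exact ⟨hs.1.trans (hNiff _ hhi), hs.2⟩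
  have hminus : ∀ h ∈ G, h i ≠ 0 →
      ((0 < (ℓ₀ - N • e) ⬝ᵥ h ↔ 0 < -(h i)) ∧ (ℓ₀ - N • e) ⬝ᵥ h ≠ 0) := by
    intro h hh hhi
    have habs : |ℓ₀ ⬝ᵥ h| < |N * (-(h i))| := by
      rw [mul_neg, abs_neg]; exact hNbound h hh hhi
    have hs := sign_stable habs
    rw [hdminus h]
    exact ⟨hs.1.trans (hNiff _ (neg_ne_zero.mpr hhi)), hs.2⟩
  have hz : ∀ h : Fin d → ℝ, h i = 0 →
      (N • e + ℓ₀) ⬝ᵥ h = ℓ₀ ⬝ᵥ h ∧ (ℓ₀ - N • e) ⬝ᵥ h = ℓ₀ ⬝ᵥ h := by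
    intro h hhi
    constructor
    · rw [hdplus h, hhi]; ring
    · rw [hdminus h, hhi]; ring
  have hnzp : ∀ h ∈ G, (N • e + ℓ₀) ⬝ᵥ h ≠ 0 := by
    intro h hh
    by_cases hhi : h i = 0
    · rw [(hz h hhi).1]; exact hℓ₀ h hh
    · exact (hplus h hh hhi).2
  have hnzm : ∀ h ∈ G, (ℓ₀ - N • e) ⬝ᵥ h ≠ 0 := by
    intro h hh
    by_cases hhi : h i = 0
    · rw [(hz h hhi).2]; exact hℓ₀ h hh
    · exact (hminus h hh hhi).2
  set Fp := G.filter (fun h => 0 < (N • e + ℓ₀) ⬝ᵥ h) with hFp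
  set Fm := G.filter (fun h => 0 < (ℓ₀ - N • e) ⬝ᵥ h) with hFm
  have hFpspec : ∀ h, h ∈ Fp ↔ h ∈ G ∧ 0 < (N • e + ℓ₀) ⬝ᵥ h := fun h => Finset.mem_filter
  have hFmspec : ∀ h, h ∈ Fm ↔ h ∈ G ∧ 0 < (ℓ₀ - N • e) ⬝ᵥ h := fun h => Finset.mem_filter
  have hcp := vertex_coords hZeq hHI _ hnzp Fp hFpspec
  have hcm := vertex_coords hZeq hHI _ hnzm Fm hFmspec
  have hFpG : Fp ⊆ G := Finset.filter_subset _ _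
  have hFmG : Fm ⊆ G := Finset.filter_subset _ _
  have hsum : (∑ h ∈ Fp, h) i - (∑ h ∈ Fm, h) i = ∑ h ∈ G, |h i| := by
    rw [Finset.sum_apply, Finset.sum_apply, sum_filter_eq hFpG (fun h => h i),
      sum_filter_eq hFmG (fun h => h i), ← Finset.sum_sub_distrib]
    refine Finset.sum_congr rfl fun h hh => ?_
    rcases lt_trichotomy (h i) 0 with hhi | hhi | hhi
    · have h1 : h ∉ Fp := by
        rw [hFpspec]
        rintro ⟨-, hpos⟩
        exact absurd ((hplus h hh hhi.ne).1.mp hpos) (by linarith)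
      have h2 : h ∈ Fm := (hFmspec h).mpr ⟨hh, (hminus h hh hhi.ne).1.mpr (by linarith)⟩
      rw [if_neg h1, if_pos h2, abs_of_neg hhi]
      ring
    · simp [if_pos, if_neg, hhi]
    · have h1 : h ∈ Fp := (hFpspec h).mpr ⟨hh, (hplus h hh hhi.ne').1.mpr hhi⟩
      have h2 : h ∉ Fm := by
        rw [hFmspec]
        rintro ⟨-, hpos⟩
        exact absurd ((hminus h hh hhi.ne').1.mp hpos) (by linarith)
      rw [if_pos h1, if_neg h2, abs_of_pos hhi]
      ring
  have hb1 : (t + ∑ h ∈ Fp, h) i ≤ 1 := by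
    rcases hcp i with h | h | h <;> rw [h] <;> norm_num
  have hb2 : 0 ≤ (t + ∑ h ∈ Fm, h) i := by
    rcases hcm i with h | h | h <;> rw [h] <;> norm_num
  have : ∑ h ∈ G, |h i| = (t + ∑ h ∈ Fp, h) i - (t + ∑ h ∈ Fm, h) i := by
    simp only [Pi.add_apply]
    rw [← hsum]
    ring
  linarith [this]

end HalfIntAux

open HalfIntAux Matrix

/-- If `𝒜` is a minimally linearly dependent subset of the generator set `𝒢` of a
half-integral zonotope, then `span 𝒜` and `span (𝒢 ∖ 𝒜)` are orthogonal for the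
standard inner product of `ℝ^d`. -/
theorem halfIntegral_zonotope_minLinDep_orthogonal {d : ℕ} (Z : Set (Fin d → ℝ))
    (G A : Finset (Fin d → ℝ)) (hZ : IsZonotopeWithGenerators Z G)
    (hHI : IsHalfIntegral Z) (hAG : A ⊆ G) (hA : MinLinDep A) :
    ∀ x ∈ Submodule.span ℝ (A : Set (Fin d → ℝ)),
      ∀ y ∈ Submodule.span ℝ ((G : Set (Fin d → ℝ)) \ (A : Set (Fin d → ℝ))),
        ∑ i, x i * y i = 0 := by
  classical
  -- extract a dependency with full support on A
  have hdep : ¬ ∀ l ∈ Finsupp.supported ℝ ℝ (A : Set (Fin d → ℝ)),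
      Finsupp.linearCombination ℝ id l = 0 → l = 0 :=
    fun H => hA.1 ((linearIndepOn_iff (v := id)).mpr H)
  push_neg at hdep
  obtain ⟨l, hlsupp, hl0, hlne⟩ := hdep
  have hall : ∀ a ∈ A, l a ≠ 0 := by
    intro a ha hla
    have hB := hA.2 (A.erase a) (Finset.erase_ssubset ha)
    have hsupp' : l ∈ Finsupp.supported ℝ ℝ ((A.erase a : Finset (Fin d → ℝ)) : Set (Fin d → ℝ)) := by
      rw [Finsupp.mem_supported]
      intro x hx
      have hxA : x ∈ (A : Set (Fin d → ℝ)) := (Finsupp.mem_supported ℝ l).mp hlsupp hx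
      have hxa : x ≠ a := fun h => (Finsupp.mem_support_iff.mp hx) (h ▸ hla)
      simp only [Finset.coe_erase, Set.mem_diff, Set.mem_singleton_iff]
      exact ⟨hxA, hxa⟩
    exact hlne ((linearIndepOn_iff (v := id)).mp hB l hsupp' hl0)
  have hsuppA : l.support = A := by
    apply Finset.Subset.antisymm
    · intro x hx
      exact (Finsupp.mem_supported ℝ l).mp hlsupp hx
    · intro a ha
      exact Finsupp.mem_support_iff.mpr (hall a ha)
  have hrel : ∑ a ∈ A, l a • a = 0 := by
    have := hl0
    rw [Finsupp.linearCombination_apply, Finsupp.sum, hsuppA] at this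
    simpa using this
  have hcoord : ∀ i, ∑ a ∈ A, l a * a i = 0 := by
    intro i
    have := congrFun hrel i
    rw [Finset.sum_apply] at this
    simpa using this
  -- the key coordinate fact
  have hentries := gen_entries hZ hHI
  have hcols := colsum hZ hHI
  have key : ∀ i, ∀ a ∈ A, a i ≠ 0 → ∀ h ∈ G, h ∉ A → h i = 0 := by
    intro i a ha hai h hhG hhA
    have h2 : ∃ b ∈ A, b ≠ a ∧ b i ≠ 0 := by
      by_contra hc
      push_neg at hc
      have hsingle : ∑ x ∈ A, l x * x i = l a * a i :=
        Finset.sum_eq_single_of_mem a ha fun b hb hba => by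
          rw [hc b hb hba, mul_zero]
      rw [hcoord i] at hsingle
      exact mul_ne_zero (hall a ha) hai hsingle.symm
    obtain ⟨b, hb, hba, hbi⟩ := h2
    have e1 : 1/2 ≤ |a i| := (hentries a (hAG ha) i).resolve_left hai
    have e2 : 1/2 ≤ |b i| := (hentries b (hAG hb) i).resolve_left hbi
    have hha : h ≠ a := fun h' => hhA (h' ▸ ha)
    have hhb : h ≠ b := fun h' => hhA (h' ▸ hb)
    have hsub : ({a, b, h} : Finset (Fin d → ℝ)) ⊆ G := by
      intro x hx
      rcases Finset.mem_insert.mp hx with rfl | hx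
      · exact hAG ha
      rcases Finset.mem_insert.mp hx with rfl | hx
      · exact hAG hb
      · rw [Finset.mem_singleton.mp hx]; exact hhG
    have hsum3 : ∑ x ∈ ({a, b, h} : Finset (Fin d → ℝ)), |x i| = |a i| + |b i| + |h i| := by
      rw [Finset.sum_insert (by simp [hba.symm, hha.symm]),
        Finset.sum_insert (by simp [hhb.symm]), Finset.sum_singleton]
      ring
    have hle : ∑ x ∈ ({a, b, h} : Finset (Fin d → ℝ)), |x i| ≤ ∑ g ∈ G, |g i| :=
      Finset.sum_le_sum_of_subset_of_nonneg hsub fun x _ _ => abs_nonneg _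
    have : |h i| ≤ 0 := by
      have := hcols i
      rw [hsum3] at hle
      linarith
    exact abs_eq_zero.mp (le_antisymm this (abs_nonneg _))
  -- generators of the two spans are orthogonal
  have base : ∀ a ∈ A, ∀ h ∈ (G : Set (Fin d → ℝ)) \ (A : Set (Fin d → ℝ)), a ⬝ᵥ h = 0 := by
    rintro a ha h ⟨hhG, hhA⟩
    apply Finset.sum_eq_zero
    intro i _
    rcases eq_or_ne (a i) 0 with h0 | h0
    · rw [h0, zero_mul]
    · rw [key i a ha h0 h hhG (fun hc => hhA hc), mul_zero]
  intro x hx y hy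
  have st1 : ∀ a ∈ A, a ⬝ᵥ y = 0 := by
    intro a ha
    have hspan : Submodule.span ℝ ((G : Set (Fin d → ℝ)) \ (A : Set (Fin d → ℝ)))
        ≤ LinearMap.ker (dotL a) := by
      rw [Submodule.span_le]
      intro h hh
      exact LinearMap.mem_ker.mpr (base a ha h hh)
    exact hspan hy
  have st2 : y ⬝ᵥ x = 0 := by
    have hspan : Submodule.span ℝ ((A : Finset (Fin d → ℝ)) : Set (Fin d → ℝ))
        ≤ LinearMap.ker (dotL y) := by
      rw [Submodule.span_le]
      intro a ha
      have haA : a ∈ A := ha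
      exact LinearMap.mem_ker.mpr (by rw [dotL_apply, dotProduct_comm]; exact st1 a haA)
    exact hspan hx
  rw [dotProduct_comm] at st2
  exact st2
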